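/- Let p be a positive integer, S and S⁰ symmetric p×p real matrices, ξ ∈ ℝ^p, λ′ ≥ 0, and ω̃, ω̄ ∈ ℝ^p with ‖Sω̃ − ξ‖_∞ ≤ λ′ and ‖Sω̄ − ξ‖_∞ ≤ λ′. Then |ω̃ᵀSω̃ − ω̄ᵀS⁰ω̄| ≤ 2(‖ξ‖_∞ + λ′)‖ω̃ − ω̄‖₁ + ‖S − S⁰‖_∞ ‖ω̄‖₁². -/

import Mathlib

open BigOperators Matrix

/-- For symmetric matrices `S`, `S⁰` and vectors `ω̃`, `ω̄` both satisfying
the `ℓ∞` constraint `‖Sω − ξ‖_∞ ≤ λ′`, the quadratic forms satisfy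
`|ω̃ᵀSω̃ − ω̄ᵀS⁰ω̄| ≤ 2(‖ξ‖_∞ + λ′)‖ω̃ − ω̄‖₁ + ‖S − S⁰‖_∞‖ω̄‖₁²`. -/
theorem quadratic_form_difference_bound
    (p : ℕ) (hp : 0 < p)
    (S S0 : Matrix (Fin p) (Fin p) ℝ) (hS : S.IsSymm) (hS0 : S0.IsSymm)
    (ξ : Fin p → ℝ) (lam : ℝ) (hlam : 0 ≤ lam)
    (ωtil ωbar : Fin p → ℝ)
    (htil : ∀ j, |(S.mulVec ωtil - ξ) j| ≤ lam)
    (hbar : ∀ j, |(S.mulVec ωbar - ξ) j| ≤ lam) :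
    |ωtil ⬝ᵥ S.mulVec ωtil - ωbar ⬝ᵥ S0.mulVec ωbar| ≤
      2 * ((⨆ j, |ξ j|) + lam) * (∑ j, |ωtil j - ωbar j|) +
        (⨆ j, ⨆ k, |S j k - S0 j k|) * (∑ j, |ωbar j|) ^ 2 := by
  haveI : Nonempty (Fin p) := ⟨⟨0, hp⟩⟩
  set B : ℝ := (⨆ j, |ξ j|) + lam with hB
  set M : ℝ := ⨆ j, ⨆ k, |S j k - S0 j k| with hM
  -- bound on |(S.mulVec ω) j|
  have hsup : ∀ j, |ξ j| ≤ ⨆ j, |ξ j| := fun j =>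
    le_ciSup (f := fun j => |ξ j|) (Set.Finite.bddAbove (Set.finite_range _)) j
  have hMsup : ∀ j k, |S j k - S0 j k| ≤ M := by
    intro j k
    calc |S j k - S0 j k| ≤ ⨆ k, |S j k - S0 j k| :=
          le_ciSup (f := fun k => |S j k - S0 j k|) (Set.Finite.bddAbove (Set.finite_range _)) k
      _ ≤ M := le_ciSup (f := fun j => ⨆ k, |S j k - S0 j k|) (Set.Finite.bddAbove (Set.finite_range _)) j
  have hbdd : ∀ ω : Fin p → ℝ, (∀ j, |(S.mulVec ω - ξ) j| ≤ lam) →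
      ∀ j, |S.mulVec ω j| ≤ B := by
    intro ω hω j
    have h1 := hω j
    simp only [Pi.sub_apply] at h1
    calc |S.mulVec ω j| = |(S.mulVec ω j - ξ j) + ξ j| := by ring_nf
      _ ≤ |S.mulVec ω j - ξ j| + |ξ j| := abs_add_le _ _
      _ ≤ lam + (⨆ j, |ξ j|) := add_le_add h1 (hsup j)
      _ = B := by rw [hB]; ring
  -- dot product bound
  have hdot : ∀ (v : Fin p → ℝ) (ω : Fin p → ℝ), (∀ j, |S.mulVec ω j| ≤ B) →
      |v ⬝ᵥ S.mulVec ω| ≤ B * ∑ j, |v j| := by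
    intro v ω hω
    rw [dotProduct]
    calc |∑ j, v j * S.mulVec ω j| ≤ ∑ j, |v j * S.mulVec ω j| :=
          Finset.abs_sum_le_sum_abs _ _
      _ ≤ ∑ j, |v j| * B := by
          apply Finset.sum_le_sum
          intro j _
          rw [abs_mul]
          exact mul_le_mul_of_nonneg_left (hω j) (abs_nonneg _)
      _ = B * ∑ j, |v j| := by rw [Finset.mul_sum]; simp [mul_comm]
  -- symmetry swap
  have hswap : ∀ x y : Fin p → ℝ, x ⬝ᵥ S.mulVec y = y ⬝ᵥ S.mulVec x := by
    intro x y
    rw [Matrix.dotProduct_mulVec, ← Matrix.mulVec_transpose, hS.eq,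
      dotProduct_comm]
  have key : ωtil ⬝ᵥ S.mulVec ωtil - ωbar ⬝ᵥ S0.mulVec ωbar =
      (fun j => ωtil j - ωbar j) ⬝ᵥ S.mulVec ωtil +
      (fun j => ωtil j - ωbar j) ⬝ᵥ S.mulVec ωbar +
      ∑ j, ∑ k, ωbar j * (S j k - S0 j k) * ωbar k := by
    have h2 : ωbar ⬝ᵥ S.mulVec (fun j => ωtil j - ωbar j) =
        (fun j => ωtil j - ωbar j) ⬝ᵥ S.mulVec ωbar := hswap _ _
    simp only [dotProduct, Matrix.mulVec, dotProduct, Finset.mul_sum] at h2 ⊢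
    have e : ∀ j k : Fin p, ωtil j * (S j k * ωtil k) - ωbar j * (S0 j k * ωbar k)
        = (ωtil j - ωbar j) * (S j k * ωtil k)
          + ωbar j * (S j k * (ωtil k - ωbar k))
          + ωbar j * (S j k - S0 j k) * ωbar k := by intros; ring
    calc (∑ j, ∑ k, ωtil j * (S j k * ωtil k)) - ∑ j, ∑ k, ωbar j * (S0 j k * ωbar k)
        = ∑ j, ∑ k, ((ωtil j - ωbar j) * (S j k * ωtil k)
            + ωbar j * (S j k * (ωtil k - ωbar k))
            + ωbar j * (S j k - S0 j k) * ωbar k) := by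
          rw [← Finset.sum_sub_distrib]
          simp_rw [← Finset.sum_sub_distrib, e]
      _ = (∑ j, ∑ k, (ωtil j - ωbar j) * (S j k * ωtil k))
            + (∑ j, ∑ k, ωbar j * (S j k * (ωtil k - ωbar k)))
            + ∑ j, ∑ k, ωbar j * (S j k - S0 j k) * ωbar k := by
          simp [Finset.sum_add_distrib]
      _ = _ := by rw [h2]
  have hmatbound : |∑ j, ∑ k, ωbar j * (S j k - S0 j k) * ωbar k| ≤
      M * (∑ j, |ωbar j|) ^ 2 := by
    have : (∑ j, |ωbar j|) ^ 2 = ∑ j, ∑ k, |ωbar j| * |ωbar k| := by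
      rw [sq, Finset.sum_mul_sum]
    rw [this, Finset.mul_sum]
    calc |∑ j, ∑ k, ωbar j * (S j k - S0 j k) * ωbar k|
        ≤ ∑ j, |∑ k, ωbar j * (S j k - S0 j k) * ωbar k| :=
          Finset.abs_sum_le_sum_abs _ _
      _ ≤ ∑ j, ∑ k, |ωbar j * (S j k - S0 j k) * ωbar k| := by
          apply Finset.sum_le_sum; intro j _; exact Finset.abs_sum_le_sum_abs _ _
      _ ≤ ∑ j, M * ∑ k, |ωbar j| * |ωbar k| := by
          apply Finset.sum_le_sum; intro j _
          rw [Finset.mul_sum]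
          apply Finset.sum_le_sum; intro k _
          rw [abs_mul, abs_mul]
          have hM0 : 0 ≤ M := le_trans (abs_nonneg _) (hMsup j j)
          calc |ωbar j| * |S j k - S0 j k| * |ωbar k|
              ≤ |ωbar j| * M * |ωbar k| := by
                apply mul_le_mul_of_nonneg_right _ (abs_nonneg _)
                exact mul_le_mul_of_nonneg_left (hMsup j k) (abs_nonneg _)
            _ = M * (|ωbar j| * |ωbar k|) := by ring
  rw [key]
  calc |(fun j => ωtil j - ωbar j) ⬝ᵥ S.mulVec ωtil +
        (fun j => ωtil j - ωbar j) ⬝ᵥ S.mulVec ωbar +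
        ∑ j, ∑ k, ωbar j * (S j k - S0 j k) * ωbar k|
      ≤ |(fun j => ωtil j - ωbar j) ⬝ᵥ S.mulVec ωtil| +
        |(fun j => ωtil j - ωbar j) ⬝ᵥ S.mulVec ωbar| +
        |∑ j, ∑ k, ωbar j * (S j k - S0 j k) * ωbar k| :=
        (abs_add_le _ _).trans (add_le_add_left (abs_add_le _ _) _)
    _ ≤ B * (∑ j, |ωtil j - ωbar j|) + B * (∑ j, |ωtil j - ωbar j|) +
        M * (∑ j, |ωbar j|) ^ 2 :=
        add_le_add (add_le_add (hdot _ _ (hbdd _ htil)) (hdot _ _ (hbdd _ hbar))) hmatbound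
    _ = 2 * B * (∑ j, |ωtil j - ωbar j|) + M * (∑ j, |ωbar j|) ^ 2 := by ring
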